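/- Let X ∈ ℝ^{p×m} have full column rank with H = XᵀX = RᵀR, R invertible. Then for ΔW ∈ ℝ^{m×n}, the optimal value min_{A ∈ ℝ^{m×r}, B ∈ ℝ^{n×r}} ‖X(A Bᵀ − ΔW)‖²_F equals Σ_{i>r} σᵢ(R ΔW)², the sum of squared singular values of R ΔW beyond the r-th. -/

import Mathlib

open Matrix

/-- Frobenius norm squared: `‖A‖²_F = Tr(Aᵀ A)`. -/
noncomputable def frobSq {m n : ℕ} (A : Matrix (Fin m) (Fin n) ℝ) : ℝ :=
  Matrix.trace (Aᵀ * A)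

open Finset

lemma frobSq_eq_sum {m n : ℕ} (A : Matrix (Fin m) (Fin n) ℝ) :
    frobSq A = ∑ j, ∑ i, (A i j)^2 := by
  simp [frobSq, Matrix.trace, Matrix.diag, Matrix.mul_apply, sq]

lemma frobSq_nonneg {m n : ℕ} (A : Matrix (Fin m) (Fin n) ℝ) : 0 ≤ frobSq A := by
  rw [frobSq_eq_sum]
  exact Finset.sum_nonneg fun j _ => Finset.sum_nonneg fun i _ => sq_nonneg _

lemma frobSq_proj {m n : ℕ} (K : Matrix (Fin n) (Fin n) ℝ) (hKs : Kᵀ = K) (hK2 : K * K = K)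
    (N' : Matrix (Fin m) (Fin n) ℝ) : frobSq (N' * K) ≤ frobSq N' := by
  have h : frobSq N' = frobSq (N' * K) + frobSq (N' * (1 - K)) := by
    simp only [frobSq, transpose_mul, transpose_sub, transpose_one, hKs]
    rw [Matrix.trace_mul_comm (K * N'ᵀ), Matrix.trace_mul_comm ((1-K) * N'ᵀ)]
    rw [show N' * K * (K * N'ᵀ) = N' * (K*K) * N'ᵀ by
          rw [Matrix.mul_assoc, Matrix.mul_assoc, Matrix.mul_assoc],
        show N' * (1-K) * ((1-K) * N'ᵀ) = N' * ((1-K)*(1-K)) * N'ᵀ by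
          rw [Matrix.mul_assoc, Matrix.mul_assoc, Matrix.mul_assoc]]
    rw [show (1-K)*(1-K) = 1 - K by
          rw [Matrix.sub_mul, Matrix.mul_sub, Matrix.mul_sub, hK2]; simp, hK2]
    rw [Matrix.mul_sub, Matrix.mul_one, Matrix.sub_mul, Matrix.trace_sub,
        Matrix.trace_mul_comm N' N'ᵀ]
    ring
  have := frobSq_nonneg (N' * (1 - K))
  linarith

lemma key_ineq {n r : ℕ} (hrn : r < n) (d t : Fin n → ℝ)
    (hd0 : ∀ i, 0 ≤ d i) (hdm : ∀ i j : Fin n, i ≤ j → d j ≤ d i)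
    (ht0 : ∀ i, 0 ≤ t i) (ht1 : ∀ i, t i ≤ 1)
    (hts : ∑ i, t i = ((n - r : ℕ) : ℝ)) :
    ∑ i ∈ univ.filter (fun i : Fin n => r ≤ (i : ℕ)), d i ≤ ∑ i, d i * t i := by
  classical
  set i₀ : Fin n := ⟨r, hrn⟩ with hi₀
  set F₂ : Finset (Fin n) := univ.filter (fun i : Fin n => r ≤ (i : ℕ)) with hF₂
  set F₁ : Finset (Fin n) := univ.filter (fun i : Fin n => (i : ℕ) < r) with hF₁
  have hcard : F₂.card = n - r := by
    have : F₂ = Finset.Ici i₀ := by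
      ext i; simp [hF₂, hi₀, Fin.le_def]
    rw [this, Fin.card_Ici]
  have hsplit : ∀ f : Fin n → ℝ, ∑ i, f i = ∑ i ∈ F₁, f i + ∑ i ∈ F₂, f i := by
    intro f
    rw [hF₁, hF₂]
    rw [← Finset.sum_filter_add_sum_filter_not univ (fun i : Fin n => (i:ℕ) < r) f]
    congr 1
    apply Finset.sum_congr _ (fun _ _ => rfl)
    ext i; simp [not_lt]
  have hone : ∑ _i ∈ F₂, (1 : ℝ) = ((n - r : ℕ) : ℝ) := by
    rw [Finset.sum_const, hcard]; simp
  have h1 : ∑ i ∈ F₁, t i = ∑ i ∈ F₂, (1 - t i) := by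
    have := hsplit t
    rw [Finset.sum_sub_distrib, hone]
    linarith [hts]
  have h2 : ∑ i ∈ F₁, d i₀ * t i ≤ ∑ i ∈ F₁, d i * t i := by
    apply Finset.sum_le_sum
    intro i hi
    have : (i : ℕ) < r := by simpa [hF₁] using hi
    exact mul_le_mul_of_nonneg_right (hdm i i₀ (by simp [Fin.le_def, hi₀]; omega)) (ht0 i)
  have h3 : ∑ i ∈ F₂, d i * (1 - t i) ≤ ∑ i ∈ F₂, d i₀ * (1 - t i) := by
    apply Finset.sum_le_sum
    intro i hi
    have : r ≤ (i : ℕ) := by simpa [hF₂] using hi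
    exact mul_le_mul_of_nonneg_right (hdm i₀ i (by simp [Fin.le_def, hi₀]; omega))
      (by linarith [ht1 i])
  have h4 : ∑ i ∈ F₁, d i₀ * t i = ∑ i ∈ F₂, d i₀ * (1 - t i) := by
    rw [← Finset.mul_sum, ← Finset.mul_sum, h1]
  have h5 : ∑ i ∈ F₂, d i * (1 - t i) = ∑ i ∈ F₂, d i - ∑ i ∈ F₂, d i * t i := by
    rw [← Finset.sum_sub_distrib]; apply Finset.sum_congr rfl; intros; ring
  have := hsplit (fun i => d i * t i)
  have h6 : 0 ≤ ∑ i ∈ F₁, d i * t i :=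
    Finset.sum_nonneg fun i _ => mul_nonneg (hd0 i) (ht0 i)
  linarith

-- step 1: orthonormal family in kernel
lemma exists_family {n r : ℕ} (B : Matrix (Fin n) (Fin r) ℝ) :
    ∃ f : Fin (n - r) → EuclideanSpace ℝ (Fin n),
      (∀ k l, (inner ℝ (f k) (f l) : ℝ) = if k = l then 1 else 0) ∧
      (∀ k, Bᵀ.mulVec (f k) = 0) := by
  classical
  let L : EuclideanSpace ℝ (Fin n) →ₗ[ℝ] (Fin r → ℝ) :=
    Bᵀ.mulVecLin ∘ₗ (WithLp.linearEquiv 2 ℝ (∀ _ : Fin n, ℝ)).toLinearMap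
  have hdim : n - r ≤ Module.finrank ℝ (LinearMap.ker L) := by
    have h1 := LinearMap.finrank_range_add_finrank_ker L
    have h2 : Module.finrank ℝ (LinearMap.range L) ≤ r :=
      (Submodule.finrank_le _).trans_eq (by simp)
    have h3 : Module.finrank ℝ (EuclideanSpace ℝ (Fin n)) = n := by simp
    omega
  let b := stdOrthonormalBasis ℝ (LinearMap.ker L)
  refine ⟨fun k => ((b (Fin.castLE hdim k) : LinearMap.ker L) : EuclideanSpace ℝ (Fin n)),
    ?_, ?_⟩
  · intro k l
    have h := orthonormal_iff_ite.mp b.orthonormal (Fin.castLE hdim k) (Fin.castLE hdim l)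
    rw [Submodule.coe_inner] at h
    simpa [Fin.castLE_inj] using h
  · intro k
    have h : (b (Fin.castLE hdim k) : EuclideanSpace ℝ (Fin n)) ∈ LinearMap.ker L :=
      (b (Fin.castLE hdim k)).2
    rw [Matrix.mulVec_transpose]
    simpa [L, LinearMap.mem_ker] using h

lemma exists_proj {n r : ℕ} (B : Matrix (Fin n) (Fin r) ℝ) :
    ∃ K : Matrix (Fin n) (Fin n) ℝ,
      Kᵀ = K ∧ K * K = K ∧ Bᵀ * K = 0 ∧ K.trace = ((n - r : ℕ) : ℝ) := by
  classical
  obtain ⟨f, hf, hker⟩ := exists_family B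
  have hinner : ∀ k l, ∑ i, f k i * f l i = if k = l then 1 else 0 := by
    intro k l
    rw [← hf k l, PiLp.inner_apply (f k) (f l)]
    simp [RCLike.inner_apply, mul_comm]
  refine ⟨Matrix.of (fun i j => ∑ k, f k i * f k j), ?_, ?_, ?_, ?_⟩
  · ext i j
    simp only [transpose_apply, Matrix.of_apply]
    exact Finset.sum_congr rfl fun k _ => mul_comm _ _
  · ext i j
    simp only [Matrix.mul_apply, Matrix.of_apply]
    calc ∑ l, (∑ k, f k i * f k l) * (∑ k', f k' l * f k' j)
        = ∑ k, ∑ k', (f k i * f k' j) * ∑ l, f k l * f k' l := by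
          simp_rw [Finset.sum_mul, Finset.mul_sum]
          rw [Finset.sum_comm]
          refine Finset.sum_congr rfl fun k _ => ?_
          rw [Finset.sum_comm]
          exact Finset.sum_congr rfl fun k' _ => Finset.sum_congr rfl fun l _ => by ring
      _ = ∑ k, f k i * f k j := by
          simp only [hinner, mul_ite, mul_one, mul_zero]
          simp [Finset.sum_ite_eq']
      _ = _ := rfl
  · ext c j
    simp only [Matrix.mul_apply, Matrix.of_apply, Matrix.zero_apply]
    calc ∑ i, Bᵀ c i * ∑ k, f k i * f k j
        = ∑ k, (∑ i, Bᵀ c i * f k i) * f k j := by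
          simp_rw [Finset.mul_sum, Finset.sum_mul, ← mul_assoc]
          exact Finset.sum_comm
      _ = 0 := by
          apply Finset.sum_eq_zero
          intro k _
          have : Bᵀ.mulVec (f k) c = 0 := by rw [hker k]; rfl
          rw [show (∑ i, Bᵀ c i * f k i) = Bᵀ.mulVec (f k) c from rfl, this, zero_mul]
  · simp only [Matrix.trace, Matrix.diag, Matrix.of_apply]
    rw [Finset.sum_comm]
    calc ∑ k, ∑ i, f k i * f k i = ∑ k : Fin (n-r), (1:ℝ) := by
          apply Finset.sum_congr rfl
          intro k _
          simpa using hinner k k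
      _ = ((n - r : ℕ) : ℝ) := by simp

lemma eckart_lower {m n r : ℕ} (σ : ℕ → ℝ) (hσnn : ∀ i, 0 ≤ σ i)
    (hσmono : ∀ i j, i ≤ j → σ j ≤ σ i)
    (S : Matrix (Fin m) (Fin n) ℝ)
    (hS : ∀ i j, S i j = if (i:ℕ) = (j:ℕ) then σ (i:ℕ) else 0)
    (A : Matrix (Fin m) (Fin r) ℝ) (B : Matrix (Fin n) (Fin r) ℝ) :
    ∑ i ∈ Finset.Ico r (min m n), σ i ^ 2 ≤ frobSq (A * Bᵀ - S) := by
  classical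
  rcases le_or_gt (min m n) r with hr | hr
  · rw [show Finset.Ico r (min m n) = ∅ from Finset.Ico_eq_empty (by omega)]
    simpa using frobSq_nonneg _
  have hrn : r < n := lt_of_lt_of_le hr (min_le_right m n)
  obtain ⟨K, hKs, hK2, hBK, hKtr⟩ := exists_proj B
  set d : Fin n → ℝ := fun j => if (j:ℕ) < m then σ (j:ℕ) ^ 2 else 0 with hd
  have hdiag : Sᵀ * S = Matrix.diagonal d := by
    ext j i
    rw [Matrix.mul_apply]
    simp only [transpose_apply]
    by_cases hji : j = i
    · subst hji
      rw [Matrix.diagonal_apply_eq]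
      simp only [hS]
      rw [Fin.sum_univ_eq_sum_range (fun x => (if x = (j:ℕ) then σ x else 0) *
            (if x = (j:ℕ) then σ x else 0)) m]
      rw [Finset.sum_congr rfl (fun x _ => show (if x = (j:ℕ) then σ x else 0) *
            (if x = (j:ℕ) then σ x else 0) = if x = (j:ℕ) then σ x * σ x else 0 by
          split_ifs <;> simp)]
      rw [Finset.sum_ite_eq' (Finset.range m) (j:ℕ) (fun x => σ x * σ x)]
      simp [hd, sq]
    · rw [Matrix.diagonal_apply_ne _ hji]
      apply Finset.sum_eq_zero
      intro l _
      simp only [hS]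
      have : (j : ℕ) ≠ (i : ℕ) := fun h => hji (Fin.val_injective h)
      split_ifs with h1 h2 <;> simp_all <;> omega
  have hNK : (A * Bᵀ - S) * K = -(S * K) := by
    rw [Matrix.sub_mul, Matrix.mul_assoc, hBK, Matrix.mul_zero]
    simp
  have hstep1 : frobSq ((A * Bᵀ - S) * K) ≤ frobSq (A * Bᵀ - S) :=
    frobSq_proj K hKs hK2 _
  have hstep2 : frobSq ((A * Bᵀ - S) * K) = Matrix.trace (Matrix.diagonal d * K) := by
    rw [hNK, show frobSq (-(S * K)) = frobSq (S * K) by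
      simp [frobSq, Matrix.transpose_neg, Matrix.neg_mul, Matrix.mul_neg]]
    unfold frobSq
    rw [Matrix.transpose_mul, Matrix.mul_assoc Kᵀ, ← Matrix.mul_assoc Sᵀ S K, hdiag, hKs,
        ← Matrix.mul_assoc K, Matrix.trace_mul_cycle, hK2, Matrix.trace_mul_comm]
  have htr : Matrix.trace (Matrix.diagonal d * K) = ∑ j, d j * K j j := by
    simp [Matrix.trace, Matrix.diag, Matrix.diagonal_mul]
  have hKdiag : ∀ i, K i i = ∑ j, K i j ^ 2 := by
    intro i
    conv_lhs => rw [← hK2]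
    rw [Matrix.mul_apply]
    refine Finset.sum_congr rfl fun j _ => ?_
    rw [show K j i = Kᵀ i j from rfl, hKs, sq]
  have ht0 : ∀ i, 0 ≤ K i i := fun i => by
    rw [hKdiag i]; exact Finset.sum_nonneg fun j _ => sq_nonneg _
  have ht1 : ∀ i, K i i ≤ 1 := by
    intro i
    have h1 : K i i ^ 2 ≤ K i i := by
      conv_rhs => rw [hKdiag i]
      exact Finset.single_le_sum (f := fun j => K i j ^ 2) (fun j _ => sq_nonneg _) (Finset.mem_univ i)
    nlinarith [ht0 i]
  have hts : ∑ i, K i i = ((n - r : ℕ) : ℝ) := hKtr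
  have hd0 : ∀ i, 0 ≤ d i := by
    intro i; simp only [hd]; split_ifs; exacts [sq_nonneg _, le_refl 0]
  have hdm : ∀ i j : Fin n, i ≤ j → d j ≤ d i := by
    intro i j hij
    simp only [hd]
    have hij' : (i:ℕ) ≤ (j:ℕ) := hij
    split_ifs with h1 h2 h2
    · exact pow_le_pow_left₀ (hσnn _) (hσmono _ _ hij') 2
    · omega
    · exact sq_nonneg _
    · exact le_refl 0
  have hkey := key_ineq hrn d (fun i => K i i) hd0 hdm ht0 ht1 hts
  have hsum : ∑ i ∈ Finset.univ.filter (fun i : Fin n => r ≤ (i : ℕ)), d i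
      = ∑ i ∈ Finset.Ico r (min m n), σ i ^ 2 := by
    rw [Finset.sum_filter]
    rw [Fin.sum_univ_eq_sum_range (fun x => if r ≤ x then (if x < m then σ x ^ 2 else 0) else 0) n]
    have hgen : (∑ x ∈ Finset.range n, if r ≤ x then (if x < m then σ x ^ 2 else 0) else 0)
          = ∑ x ∈ (Finset.range n).filter (fun x => r ≤ x ∧ x < m), σ x ^ 2 := by
      rw [Finset.sum_filter]
      refine Finset.sum_congr rfl fun x _ => ?_
      split_ifs
      all_goals try rfl
      all_goals exfalso; omega
    rw [hgen]
    refine Finset.sum_congr ?_ fun _ _ => rfl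
    ext x
    simp only [Finset.mem_filter, Finset.mem_range, Finset.mem_Ico, lt_min_iff]
    omega
  have hkey' : ∑ i ∈ Finset.univ.filter (fun i : Fin n => r ≤ (i : ℕ)), d i
      ≤ ∑ i, d i * K i i := hkey
  linarith [hkey', hsum, htr, hstep2, hstep1]

section main
variable {p m n r : ℕ}

lemma frobSq_left {N : Matrix (Fin m) (Fin n) ℝ} (X : Matrix (Fin p) (Fin m) ℝ)
    (R : Matrix (Fin m) (Fin m) ℝ) (hH : Rᵀ * R = Xᵀ * X) :
    frobSq (X * N) = frobSq (R * N) := by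
  unfold frobSq
  rw [Matrix.transpose_mul, Matrix.transpose_mul, Matrix.mul_assoc, Matrix.mul_assoc,
      ← Matrix.mul_assoc Xᵀ X N, ← Matrix.mul_assoc Rᵀ R N, hH]

lemma frobSq_orth {M : Matrix (Fin m) (Fin n) ℝ}
    (U : Matrix (Fin m) (Fin m) ℝ) (V : Matrix (Fin n) (Fin n) ℝ)
    (hU₂ : U * Uᵀ = 1) (hV₂ : V * Vᵀ = 1) :
    frobSq (Uᵀ * M * V) = frobSq M := by
  unfold frobSq
  rw [Matrix.transpose_mul, Matrix.transpose_mul, Matrix.transpose_transpose]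
  rw [show Vᵀ * (Mᵀ * U) * (Uᵀ * M * V) = Vᵀ * (Mᵀ * ((U * Uᵀ) * M)) * V by
    simp only [Matrix.mul_assoc]]
  rw [hU₂, Matrix.one_mul]
  rw [Matrix.trace_mul_cycle]
  rw [hV₂, Matrix.one_mul]
end main

lemma frobSq_resid {m n r : ℕ} (σ : ℕ → ℝ) (S : Matrix (Fin m) (Fin n) ℝ)
    (hS : ∀ i j, S i j = if (i:ℕ) = (j:ℕ) then σ (i:ℕ) else 0) :
    frobSq ((Matrix.of fun (i : Fin m) (k : Fin r) =>
        if (i:ℕ) = (k:ℕ) then σ (i:ℕ) else 0) *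
      (Matrix.of fun (j : Fin n) (k : Fin r) =>
        if (j:ℕ) = (k:ℕ) then (1:ℝ) else 0)ᵀ - S)
      = ∑ i ∈ Finset.Ico r (min m n), σ i ^ 2 := by
  classical
  set A₀ : Matrix (Fin m) (Fin r) ℝ :=
    Matrix.of fun i k => if (i:ℕ) = (k:ℕ) then σ (i:ℕ) else 0 with hA₀
  set B₀ : Matrix (Fin n) (Fin r) ℝ :=
    Matrix.of fun j k => if (j:ℕ) = (k:ℕ) then (1:ℝ) else 0 with hB₀
  have hAB : ∀ (i : Fin m) (j : Fin n), (A₀ * B₀ᵀ) i j =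
      if (i:ℕ) = (j:ℕ) ∧ (i:ℕ) < r then σ (i:ℕ) else 0 := by
    intro i j
    rw [Matrix.mul_apply]
    simp only [transpose_apply, hA₀, hB₀, Matrix.of_apply]
    by_cases hij : (i:ℕ) = (j:ℕ)
    · trans (∑ k : Fin r, if ((k:ℕ)) = ((i:ℕ)) then σ (i:ℕ) else 0)
      · refine Finset.sum_congr rfl fun k _ => ?_
        by_cases h : (i:ℕ) = (k:ℕ)
        · rw [if_pos h, if_pos (hij ▸ h), if_pos h.symm, mul_one]
        · rw [if_neg h, zero_mul, if_neg (fun hh => h hh.symm)]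
      · rw [Fin.sum_univ_eq_sum_range (fun k => if k = (i:ℕ) then σ (i:ℕ) else 0) r,
            Finset.sum_ite_eq' (Finset.range r) ((i:ℕ)) (fun _ => σ (i:ℕ))]
        simp [Finset.mem_range, hij]
    · rw [if_neg (by tauto)]
      apply Finset.sum_eq_zero
      intro k _
      by_cases h1 : (i:ℕ) = (k:ℕ)
      · rw [if_neg (fun hh : (j:ℕ) = (k:ℕ) => hij (h1.trans hh.symm)), mul_zero]
      · rw [if_neg h1, zero_mul]
  have hsq : ∀ (i : Fin m) (j : Fin n), ((A₀ * B₀ᵀ - S) i j)^2 =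
      if (i:ℕ) = (j:ℕ) ∧ r ≤ (i:ℕ) then σ (i:ℕ) ^ 2 else 0 := by
    intro i j
    rw [Matrix.sub_apply, hAB, hS]
    split_ifs <;> first | (exfalso; omega) | ring
  rw [frobSq_eq_sum]
  rw [Finset.sum_congr rfl (fun j _ => Finset.sum_congr rfl (fun i _ => hsq i j))]
  have hinner : ∀ j : Fin n, (∑ i : Fin m, if (i:ℕ) = (j:ℕ) ∧ r ≤ (i:ℕ)
      then σ (i:ℕ) ^ 2 else 0) = if (j:ℕ) < m ∧ r ≤ (j:ℕ) then σ (j:ℕ) ^ 2 else 0 := by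
    intro j
    rw [Fin.sum_univ_eq_sum_range (fun k => if k = (j:ℕ) ∧ r ≤ k then σ k ^ 2 else 0) m]
    by_cases hrj : r ≤ (j:ℕ)
    · trans (∑ k ∈ Finset.range m, if k = (j:ℕ) then σ k ^ 2 else 0)
      · refine Finset.sum_congr rfl fun k _ => ?_
        by_cases h : k = (j:ℕ)
        · rw [if_pos ⟨h, by omega⟩, if_pos h]
        · rw [if_neg (fun hh => h hh.1), if_neg h]
      · rw [Finset.sum_ite_eq' (Finset.range m) ((j:ℕ)) (fun k => σ k ^ 2)]
        by_cases hjm : (j:ℕ) < m <;> simp [Finset.mem_range, hjm, hrj]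
    · rw [if_neg (fun hh => hrj hh.2)]
      apply Finset.sum_eq_zero
      intro k _
      rw [if_neg (by rintro ⟨h1, h2⟩; omega)]
  rw [Finset.sum_congr rfl (fun j _ => hinner j)]
  rw [Fin.sum_univ_eq_sum_range (fun x => if x < m ∧ r ≤ x then σ x ^ 2 else 0) n]
  rw [← Finset.sum_filter]
  refine Finset.sum_congr ?_ fun _ _ => rfl
  ext x
  simp only [Finset.mem_filter, Finset.mem_range, Finset.mem_Ico, lt_min_iff]
  omega

/-- With `RᵀR = XᵀX` for full-column-rank `X` and singular values
`σ₀ ≥ σ₁ ≥ …` of `R ΔW` (given via an SVD `R ΔW = U Σ Vᵀ`), the optimal value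
`min_{A, B} ‖X(A Bᵀ − ΔW)‖²_F` equals `Σ_{i ≥ r} σᵢ²`. -/
theorem stmt15 {p m n r : ℕ}
    (X : Matrix (Fin p) (Fin m) ℝ) (hX : X.rank = m)
    (R : Matrix (Fin m) (Fin m) ℝ) (hR : IsUnit R) (hH : Rᵀ * R = Xᵀ * X)
    (ΔW : Matrix (Fin m) (Fin n) ℝ)
    (U : Matrix (Fin m) (Fin m) ℝ) (V : Matrix (Fin n) (Fin n) ℝ)
    (σ : ℕ → ℝ)
    (hU₁ : Uᵀ * U = 1) (hU₂ : U * Uᵀ = 1)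
    (hV₁ : Vᵀ * V = 1) (hV₂ : V * Vᵀ = 1)
    (hσnn : ∀ i, 0 ≤ σ i) (hσmono : ∀ i j, i ≤ j → σ j ≤ σ i)
    (S : Matrix (Fin m) (Fin n) ℝ)
    (hS : ∀ i j, S i j = if (i : ℕ) = (j : ℕ) then σ (i : ℕ) else 0)
    (hSVD : R * ΔW = U * S * Vᵀ) :
    IsLeast
      {v : ℝ | ∃ (A : Matrix (Fin m) (Fin r) ℝ) (B : Matrix (Fin n) (Fin r) ℝ),
        v = frobSq (X * (A * Bᵀ - ΔW))}
      (∑ i ∈ Finset.Ico r (min m n), σ i ^ 2) := by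
  classical
  have hRdet : IsUnit R.det := (Matrix.isUnit_iff_isUnit_det R).mp hR
  have htrans : ∀ (A : Matrix (Fin m) (Fin r) ℝ) (B : Matrix (Fin n) (Fin r) ℝ),
      frobSq (X * (A * Bᵀ - ΔW)) = frobSq ((Uᵀ * R * A) * (Vᵀ * B)ᵀ - S) := by
    intro A B
    rw [frobSq_left X R hH, ← frobSq_orth U V hU₂ hV₂]
    congr 1
    rw [Matrix.mul_sub R, Matrix.mul_sub Uᵀ, Matrix.sub_mul, hSVD]
    congr 1
    · rw [Matrix.transpose_mul, Matrix.transpose_transpose]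
      simp only [Matrix.mul_assoc]
    · rw [show Uᵀ * (U * S * Vᵀ) * V = (Uᵀ * U) * (S * (Vᵀ * V)) by
        simp only [Matrix.mul_assoc], hU₁, hV₁, Matrix.one_mul, Matrix.mul_one]
  constructor
  · refine ⟨R⁻¹ * (U * (Matrix.of fun (i : Fin m) (k : Fin r) =>
        if (i:ℕ) = (k:ℕ) then σ (i:ℕ) else 0)),
      V * (Matrix.of fun (j : Fin n) (k : Fin r) =>
        if (j:ℕ) = (k:ℕ) then (1:ℝ) else 0), ?_⟩
    rw [htrans]
    rw [show Uᵀ * R * (R⁻¹ * (U * (Matrix.of fun (i : Fin m) (k : Fin r) =>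
          if (i:ℕ) = (k:ℕ) then σ (i:ℕ) else 0)))
        = (Matrix.of fun (i : Fin m) (k : Fin r) =>
          if (i:ℕ) = (k:ℕ) then σ (i:ℕ) else 0) by
      rw [Matrix.mul_assoc Uᵀ R, ← Matrix.mul_assoc R R⁻¹,
          Matrix.mul_nonsing_inv R hRdet, Matrix.one_mul, ← Matrix.mul_assoc, hU₁,
          Matrix.one_mul]]
    rw [show Vᵀ * (V * (Matrix.of fun (j : Fin n) (k : Fin r) =>
          if (j:ℕ) = (k:ℕ) then (1:ℝ) else 0))
        = (Matrix.of fun (j : Fin n) (k : Fin r) =>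
          if (j:ℕ) = (k:ℕ) then (1:ℝ) else 0) by
      rw [← Matrix.mul_assoc, hV₁, Matrix.one_mul]]
    exact (frobSq_resid σ S hS).symm
  · rintro v ⟨A, B, rfl⟩
    rw [htrans]
    exact eckart_lower σ hσnn hσmono S hS _ _
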